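/- Let G be a bipartite graph with parts A and B containing no induced copy of K_{p,p} + O_{0,p}. If G contains K_{t,t} as an induced subgraph and also contains an independent set of t vertices in A and t vertices in B with no edges between them (an induced O_{t,t}), where t = B(p,p) + p − 1 and B(p,p) is the bipartite Ramsey number, then a contradiction arises; i.e., G is either K_{t,t}-free or O_{t,t}-free. -/

import Mathlib

/-- The bipartite Ramsey number `B(p,q)`: the minimum `N` such that every bipartite graph
with at least `N` vertices in each part contains `K_{p,q}` or `O_{p,q}` as an induced
(bipartite) subgraph. -/
noncomputable def bipRamseyNum (p q : ℕ) : ℕ :=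
  sInf {N | ∀ E : Fin N → Fin N → Prop,
    (∃ (f : Fin p ↪ Fin N) (g : Fin q ↪ Fin N), ∀ i j, E (f i) (g j)) ∨
    (∃ (f : Fin p ↪ Fin N) (g : Fin q ↪ Fin N), ∀ i j, ¬ E (f i) (g j))}

lemma ramsey_of_big (p N : ℕ) (hp : 0 < p)
    (hN : 2 ^ (2 * p - 1) * (p - 1) + (2 * p - 1) + 1 ≤ N)
    (E : Fin N → Fin N → Prop) :
    (∃ (f : Fin p ↪ Fin N) (g : Fin p ↪ Fin N), ∀ i j, E (f i) (g j)) ∨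
    (∃ (f : Fin p ↪ Fin N) (g : Fin p ↪ Fin N), ∀ i j, ¬ E (f i) (g j)) := by
  classical
  set m := 2 * p - 1 with hm
  have hmN : m ≤ N := by omega
  let C : Fin m ↪ Fin N := Fin.castLEEmb hmN
  let F : Fin N → Finset (Fin m) := fun r => Finset.univ.filter (fun c => E r (C c))
  have hcard : (Finset.univ : Finset (Finset (Fin m))).card * (p - 1) <
      (Finset.univ : Finset (Fin N)).card := by
    simp only [Finset.card_univ, Fintype.card_finset, Fintype.card_fin]
    omega
  obtain ⟨S, -, hS⟩ := Finset.exists_lt_card_fiber_of_mul_lt_card_of_maps_to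
    (fun a (_ : a ∈ Finset.univ) => Finset.mem_univ (F a)) hcard
  set T := Finset.univ.filter (fun a => F a = S) with hT
  have hTp : p ≤ T.card := by omega
  obtain ⟨T', hT'sub, hT'card⟩ := Finset.exists_subset_card_eq hTp
  let f : Fin p ↪ Fin N := (T'.orderEmbOfFin hT'card).toEmbedding
  have hfT : ∀ i, F (f i) = S := by
    intro i
    have hmem := hT'sub (T'.orderEmbOfFin_mem hT'card i)
    have h2 : F (T'.orderEmbOfFin hT'card i) = S := by simpa [hT] using hmem
    exact h2
  by_cases hSc : p ≤ S.card
  · obtain ⟨S', hsub, hc⟩ := Finset.exists_subset_card_eq hSc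
    refine Or.inl ⟨f, ((S'.orderEmbOfFin hc).toEmbedding).trans C, fun i j => ?_⟩
    have hmem : S'.orderEmbOfFin hc j ∈ S := hsub (S'.orderEmbOfFin_mem hc j)
    rw [← hfT i] at hmem
    exact (Finset.mem_filter.mp hmem).2
  · have hc2 : p ≤ Sᶜ.card := by
      have h1 := Finset.card_le_univ S
      rw [Finset.card_compl, Fintype.card_fin]
      omega
    obtain ⟨S', hsub, hc⟩ := Finset.exists_subset_card_eq hc2
    refine Or.inr ⟨f, ((S'.orderEmbOfFin hc).toEmbedding).trans C, fun i j hE => ?_⟩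
    have hmem : S'.orderEmbOfFin hc j ∈ Sᶜ := hsub (S'.orderEmbOfFin_mem hc j)
    rw [Finset.mem_compl, ← hfT i] at hmem
    exact hmem (Finset.mem_filter.mpr ⟨Finset.mem_univ _, hE⟩)

lemma ramseySetNonempty (p : ℕ) (hp : 0 < p) :
    {N | ∀ E : Fin N → Fin N → Prop,
      (∃ (f : Fin p ↪ Fin N) (g : Fin p ↪ Fin N), ∀ i j, E (f i) (g j)) ∨
      (∃ (f : Fin p ↪ Fin N) (g : Fin p ↪ Fin N), ∀ i j, ¬ E (f i) (g j))}.Nonempty :=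
  ⟨2 ^ (2 * p - 1) * (p - 1) + (2 * p - 1) + 1,
    fun E => ramsey_of_big p _ hp le_rfl E⟩

lemma bipRamsey_mem (p : ℕ) (hp : 0 < p) :
    ∀ E : Fin (bipRamseyNum p p) → Fin (bipRamseyNum p p) → Prop,
      (∃ (f : Fin p ↪ Fin (bipRamseyNum p p)) (g : Fin p ↪ Fin (bipRamseyNum p p)),
        ∀ i j, E (f i) (g j)) ∨
      (∃ (f : Fin p ↪ Fin (bipRamseyNum p p)) (g : Fin p ↪ Fin (bipRamseyNum p p)),
        ∀ i j, ¬ E (f i) (g j)) :=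
  Nat.sInf_mem (ramseySetNonempty p hp)

lemma bipRamsey_pos (p : ℕ) (hp : 0 < p) : 0 < bipRamseyNum p p := by
  rcases Nat.eq_zero_or_pos (bipRamseyNum p p) with h0 | h
  · exfalso
    have h := bipRamsey_mem p hp
    rw [h0] at h
    rcases h (fun _ _ => True) with ⟨f, -, -⟩ | ⟨f, -, -⟩ <;> exact (f ⟨0, hp⟩).elim0
  · exact h

/-- A bipartite graph with no induced copy of `K_{p,p} + O_{0,p}` (in either orientation)
is `K_{t,t}`-free or `O_{t,t}`-free, where `t = B(p,p) + p - 1`. -/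
theorem stmt7 {V₁ V₂ : Type*} (E : V₁ → V₂ → Prop) (p : ℕ) (hp : 0 < p)
    (hfree₁ : ¬ ∃ (P : Fin p ↪ V₁) (Q : Fin p ↪ V₂) (R : Fin p ↪ V₂),
      (∀ j k, Q j ≠ R k) ∧ (∀ i j, E (P i) (Q j)) ∧ (∀ i k, ¬ E (P i) (R k)))
    (hfree₂ : ¬ ∃ (P : Fin p ↪ V₂) (Q : Fin p ↪ V₁) (R : Fin p ↪ V₁),
      (∀ j k, Q j ≠ R k) ∧ (∀ i j, E (Q j) (P i)) ∧ (∀ i k, ¬ E (R k) (P i))) :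
    ¬ ((∃ (f : Fin (bipRamseyNum p p + p - 1) ↪ V₁) (g : Fin (bipRamseyNum p p + p - 1) ↪ V₂),
          ∀ i j, E (f i) (g j)) ∧
       (∃ (f : Fin (bipRamseyNum p p + p - 1) ↪ V₁) (g : Fin (bipRamseyNum p p + p - 1) ↪ V₂),
          ∀ i j, ¬ E (f i) (g j))) := by
  rintro ⟨⟨f, g, hfg⟩, ⟨f', g', hfg'⟩⟩
  have hB1 : 0 < bipRamseyNum p p := bipRamsey_pos p hp
  have hBt : bipRamseyNum p p ≤ bipRamseyNum p p + p - 1 := by omega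
  have hpt : p ≤ bipRamseyNum p p + p - 1 := by omega
  let e : Fin (bipRamseyNum p p) ↪ Fin (bipRamseyNum p p + p - 1) :=
    Fin.castLEEmb hBt
  let ep : Fin p ↪ Fin (bipRamseyNum p p + p - 1) := Fin.castLEEmb hpt
  rcases bipRamsey_mem p hp (fun i j => E (f (e i)) (g' (e j))) with
    ⟨P₀, R₀, h⟩ | ⟨P₀, R₀, h⟩
  · -- complete grid between K-rows and O-columns: forbidden pattern in orientation 2
    apply hfree₂
    refine ⟨(R₀.trans e).trans g', (P₀.trans e).trans f, ep.trans f', ?_, ?_, ?_⟩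
    · intro j k hjk
      have h1 : E (f (e (P₀ j))) (g' (e (R₀ ⟨0, hp⟩))) := h j ⟨0, hp⟩
      have h2 : ¬ E (f' (ep k)) (g' (e (R₀ ⟨0, hp⟩))) := hfg' _ _
      simp only [Function.Embedding.trans_apply] at hjk
      rw [hjk] at h1
      exact h2 h1
    · intro i j
      exact h j i
    · intro i k
      exact hfg' _ _
  · -- empty grid between K-rows and O-columns: forbidden pattern in orientation 1
    apply hfree₁
    refine ⟨(P₀.trans e).trans f, ep.trans g, (R₀.trans e).trans g', ?_, ?_, ?_⟩
    · intro j k hjk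
      have h1 : E (f (e (P₀ ⟨0, hp⟩))) (g (ep j)) := hfg _ _
      have h2 : ¬ E (f (e (P₀ ⟨0, hp⟩))) (g' (e (R₀ k))) := h ⟨0, hp⟩ k
      simp only [Function.Embedding.trans_apply] at hjk
      rw [hjk] at h1
      exact h2 h1
    · intro i j
      exact hfg _ _
    · intro i k
      exact h i k
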